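/- Let μ₀ > 0 be a real constant, let r ∈ ℝ³ with r ≠ 0, let ω > 0, and let μ_iˢ, μ_iᶜ, μ_jˢ, μ_jᶜ ∈ ℝ³. Define the time-varying dipole moments μ_i(t) = μ_iˢ·sin(ωt) + μ_iᶜ·cos(ωt) and μ_j(t) = μ_jˢ·sin(ωt) + μ_jᶜ·cos(ωt), and the dipole torque τ(μ_i, μ_j, r) = (μ₀/(4π))· μ_j × ( 3r(μ_i·r)/‖r‖⁵ − μ_i/‖r‖³ ). Then the first-order average of the torque over one period T = 2π/ω equals (1/T)·∫₀ᵀ τ(μ_i(t), μ_j(t), r) dt = (1/2)·( τ(μ_iˢ, μ_jˢ, r) + τ(μ_iᶜ, μ_jᶜ, r) ). -/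

import Mathlib

noncomputable section

/-- Euclidean inner product on ℝ³. -/
def dot3 (u v : Fin 3 → ℝ) : ℝ := ∑ i, u i * v i

/-- Euclidean norm on ℝ³. -/
def norm3 (u : Fin 3 → ℝ) : ℝ := Real.sqrt (dot3 u u)

/-- Cross product on ℝ³. -/
def cross3 (u v : Fin 3 → ℝ) : Fin 3 → ℝ :=
  ![u 1 * v 2 - u 2 * v 1, u 2 * v 0 - u 0 * v 2, u 0 * v 1 - u 1 * v 0]

/-- The magnetic dipole interaction force exerted on dipole `μj` by dipole `μi`,
where `r` is the position of dipole j relative to dipole i. -/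
def dipoleForce (μ₀ : ℝ) (μi μj r : Fin 3 → ℝ) : Fin 3 → ℝ :=
  (3 * μ₀ / (4 * Real.pi)) •
    ((dot3 μi μj / norm3 r ^ 5) • r + (dot3 μi r / norm3 r ^ 5) • μj +
      (dot3 μj r / norm3 r ^ 5) • μi -
      (5 * dot3 μi r * dot3 μj r / norm3 r ^ 7) • r)

/-- The magnetic dipole interaction torque exerted on dipole `μj` by dipole `μi`,
where `r` is the position of dipole j relative to dipole i. -/
def dipoleTorque (μ₀ : ℝ) (μi μj r : Fin 3 → ℝ) : Fin 3 → ℝ :=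
  (μ₀ / (4 * Real.pi)) •
    cross3 μj ((3 * dot3 μi r / norm3 r ^ 5) • r - (1 / norm3 r ^ 3) • μi)


lemma dipoleTorque_bilin (μ₀ : ℝ) (r μis μic μjs μjc : Fin 3 → ℝ) (a b : ℝ) :
    dipoleTorque μ₀ (a • μis + b • μic) (a • μjs + b • μjc) r =
      (a ^ 2) • dipoleTorque μ₀ μis μjs r +
      ((a * b) • (dipoleTorque μ₀ μis μjc r + dipoleTorque μ₀ μic μjs r) +
        (b ^ 2) • dipoleTorque μ₀ μic μjc r) := by
  funext k
  fin_cases k <;>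
    simp [dipoleTorque, cross3, dot3, Fin.sum_univ_three, smul_eq_mul] <;> ring

lemma integral_sin_omega_sq (ω T : ℝ) (hω : 0 < ω) (hT : T = 2 * Real.pi / ω) :
    ∫ t in (0:ℝ)..T, Real.sin (ω * t) ^ 2 = T / 2 := by
  have hω' : ω ≠ 0 := ne_of_gt hω
  have hωT : ω * T = 2 * Real.pi := by rw [hT]; field_simp
  rw [intervalIntegral.integral_comp_mul_left (fun x => Real.sin x ^ 2) hω', mul_zero, hωT,
    integral_sin_sq]
  simp [Real.sin_two_pi, Real.cos_two_pi, smul_eq_mul, hT]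
  field_simp

lemma integral_cos_omega_sq (ω T : ℝ) (hω : 0 < ω) (hT : T = 2 * Real.pi / ω) :
    ∫ t in (0:ℝ)..T, Real.cos (ω * t) ^ 2 = T / 2 := by
  have hω' : ω ≠ 0 := ne_of_gt hω
  have hωT : ω * T = 2 * Real.pi := by rw [hT]; field_simp
  rw [intervalIntegral.integral_comp_mul_left (fun x => Real.cos x ^ 2) hω', mul_zero, hωT,
    integral_cos_sq]
  simp [Real.sin_two_pi, Real.cos_two_pi, smul_eq_mul, hT]
  field_simp

lemma integral_sin_omega_cos_omega (ω T : ℝ) (hω : 0 < ω) (hT : T = 2 * Real.pi / ω) :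
    ∫ t in (0:ℝ)..T, Real.sin (ω * t) * Real.cos (ω * t) = 0 := by
  have hω' : ω ≠ 0 := ne_of_gt hω
  have hωT : ω * T = 2 * Real.pi := by rw [hT]; field_simp
  rw [intervalIntegral.integral_comp_mul_left (fun x => Real.sin x * Real.cos x) hω', mul_zero,
    hωT, integral_sin_mul_cos₁]
  simp [Real.sin_two_pi]

/-- the first-order average over one period `T = 2π/ω` of the dipole
torque between two AC-driven dipoles equals half the sum of the sine–sine and
cosine–cosine torques. -/
theorem dipoleTorque_first_order_average
    (μ₀ : ℝ) (hμ₀ : 0 < μ₀) (r : Fin 3 → ℝ) (hr : r ≠ 0)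
    (ω : ℝ) (hω : 0 < ω) (μis μic μjs μjc : Fin 3 → ℝ)
    (T : ℝ) (hT : T = 2 * Real.pi / ω) :
    (1 / T) • (∫ t in (0 : ℝ)..T,
        dipoleTorque μ₀ (Real.sin (ω * t) • μis + Real.cos (ω * t) • μic)
          (Real.sin (ω * t) • μjs + Real.cos (ω * t) • μjc) r) =
      (1 / 2 : ℝ) • (dipoleTorque μ₀ μis μjs r + dipoleTorque μ₀ μic μjc r) := by
  have hT0 : T ≠ 0 := by
    rw [hT]; positivity
  set A := dipoleTorque μ₀ μis μjs r
  set B := dipoleTorque μ₀ μis μjc r + dipoleTorque μ₀ μic μjs r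
  set C := dipoleTorque μ₀ μic μjc r
  have key : ∀ t : ℝ,
      dipoleTorque μ₀ (Real.sin (ω * t) • μis + Real.cos (ω * t) • μic)
          (Real.sin (ω * t) • μjs + Real.cos (ω * t) • μjc) r =
        Real.sin (ω * t) ^ 2 • A +
          ((Real.sin (ω * t) * Real.cos (ω * t)) • B + Real.cos (ω * t) ^ 2 • C) := fun t =>
    dipoleTorque_bilin μ₀ r μis μic μjs μjc _ _
  have hs : Continuous fun t : ℝ => Real.sin (ω * t) :=
    Real.continuous_sin.comp (continuous_const.mul continuous_id)
  have hc : Continuous fun t : ℝ => Real.cos (ω * t) :=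
    Real.continuous_cos.comp (continuous_const.mul continuous_id)
  have hi1 : IntervalIntegrable (fun t => Real.sin (ω * t) ^ 2 • A)
      MeasureTheory.volume 0 T :=
    (Continuous.smul (hs.pow 2) continuous_const).intervalIntegrable _ _
  have hi2 : IntervalIntegrable (fun t => (Real.sin (ω * t) * Real.cos (ω * t)) • B)
      MeasureTheory.volume 0 T :=
    (Continuous.smul (hs.mul hc) continuous_const).intervalIntegrable _ _
  have hi3 : IntervalIntegrable (fun t => Real.cos (ω * t) ^ 2 • C)
      MeasureTheory.volume 0 T :=
    (Continuous.smul (hc.pow 2) continuous_const).intervalIntegrable _ _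
  rw [show (fun t => dipoleTorque μ₀ (Real.sin (ω * t) • μis + Real.cos (ω * t) • μic)
          (Real.sin (ω * t) • μjs + Real.cos (ω * t) • μjc) r) = _ from funext key]
  rw [intervalIntegral.integral_add hi1 (hi2.add hi3),
    intervalIntegral.integral_add hi2 hi3,
    intervalIntegral.integral_smul_const, intervalIntegral.integral_smul_const,
    intervalIntegral.integral_smul_const,
    integral_sin_omega_sq ω T hω hT, integral_cos_omega_sq ω T hω hT,
    integral_sin_omega_cos_omega ω T hω hT]
  rw [zero_smul, zero_add, smul_add, smul_smul, smul_smul, smul_add]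
  rw [show 1 / T * (T / 2) = 1 / 2 by field_simp]
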